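/- Let p_{i,j} > 0 with ∑_{j=1}^{n} p_{i,j} = 1 for each i, and let q_{i,j} ≥ 0 with ∑_{i=1}^{m} max_{1≤j≤n} q_{i,j} ≤ 1. Then ∑_{i=1}^{m} ∑_{j=1}^{n} p_{i,j} q_{i,j} = 1 if and only if for each i the values q_{i,1} = q_{i,2} = ⋯ = q_{i,n} are all equal, and ∑_{i=1}^{m} q_{i,1} = 1. -/
import Mathlib


/-- Deng–Li lemma: if `p_{i,j} > 0` with `∑_j p_{i,j} = 1` for each `i`,
and `q_{i,j} ≥ 0` with `∑_i max_j q_{i,j} ≤ 1`, then `∑_i ∑_j p_{i,j} q_{i,j} = 1`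
iff for each `i` all the `q_{i,j}` are equal and `∑_i q_{i,1} = 1`. -/
theorem stmt_3 (m n : ℕ) (hm : 0 < m) (hn : 0 < n)
    (p q : Fin m → Fin n → ℝ)
    (hp : ∀ i j, 0 < p i j) (hpsum : ∀ i, ∑ j, p i j = 1)
    (hq : ∀ i j, 0 ≤ q i j)
    (hqmax : ∑ i, Finset.univ.sup' ⟨⟨0, hn⟩, Finset.mem_univ _⟩ (q i) ≤ 1) :
    (∑ i, ∑ j, p i j * q i j = 1) ↔
      ((∀ i, ∀ j j' : Fin n, q i j = q i j') ∧ ∑ i, q i ⟨0, hn⟩ = 1) := by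
  set M : Fin m → ℝ := fun i => Finset.univ.sup' ⟨⟨0, hn⟩, Finset.mem_univ _⟩ (q i) with hMdef
  have hMle : ∀ i j, q i j ≤ M i := fun i j => Finset.le_sup' _ (Finset.mem_univ j)
  have hinner : ∀ i, ∑ j, p i j * q i j ≤ M i := by
    intro i
    calc ∑ j, p i j * q i j ≤ ∑ j, p i j * M i :=
          Finset.sum_le_sum fun j _ => mul_le_mul_of_nonneg_left (hMle i j) (hp i j).le
      _ = M i := by rw [← Finset.sum_mul, hpsum i, one_mul]
  constructor
  · intro h
    have hsum_le : ∑ i, ∑ j, p i j * q i j ≤ ∑ i, M i :=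
      Finset.sum_le_sum fun i _ => hinner i
    have hMsum : ∑ i, M i = 1 := le_antisymm hqmax (h ▸ hsum_le)
    have heq : ∀ i, ∑ j, p i j * q i j = M i := by
      by_contra hc
      push_neg at hc
      obtain ⟨i0, hi0⟩ := hc
      have : ∑ i, ∑ j, p i j * q i j < ∑ i, M i :=
        Finset.sum_lt_sum (fun i _ => hinner i)
          ⟨i0, Finset.mem_univ _, lt_of_le_of_ne (hinner i0) hi0⟩
      rw [h, hMsum] at this
      exact lt_irrefl _ this
    have hqM : ∀ i j, q i j = M i := by
      intro i j
      by_contra hne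
      have hlt : q i j < M i := lt_of_le_of_ne (hMle i j) hne
      have : ∑ j', p i j' * q i j' < ∑ j', p i j' * M i :=
        Finset.sum_lt_sum
          (fun j' _ => mul_le_mul_of_nonneg_left (hMle i j') (hp i j').le)
          ⟨j, Finset.mem_univ _, by
            exact mul_lt_mul_of_pos_left hlt (hp i j)⟩
      rw [← Finset.sum_mul, hpsum i, one_mul, heq i] at this
      exact lt_irrefl _ this
    refine ⟨fun i j j' => by rw [hqM i j, hqM i j'], ?_⟩
    calc ∑ i, q i ⟨0, hn⟩ = ∑ i, M i := Finset.sum_congr rfl fun i _ => hqM i _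
      _ = 1 := hMsum
  · rintro ⟨hconst, hsum⟩
    calc ∑ i, ∑ j, p i j * q i j = ∑ i, ∑ j, p i j * q i ⟨0, hn⟩ := by
          refine Finset.sum_congr rfl fun i _ => Finset.sum_congr rfl fun j _ => ?_
          rw [hconst i j ⟨0, hn⟩]
      _ = ∑ i, q i ⟨0, hn⟩ := by
          refine Finset.sum_congr rfl fun i _ => ?_
          rw [← Finset.sum_mul, hpsum i, one_mul]
      _ = 1 := hsum
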